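/- Let d ≥ 3 be an integer, σ > 0, and let α be a Borel probability measure on ℝ^d. Fix y ∈ ℝ^d with α({y}) = 0 and 0 < ∫ |x−y|^{2−d} α(dx) < ∞. Then for every R > 0, (∫_{B(y,R)} G_{σ²}(x,y) α(dx)) / (∫_{ℝ^d} G_{σ²}(x,y) α(dx)) ≥ (∫_{B(y,R)} |x−y|^{2−d} α(dx)) / (∫_{ℝ^d} |x−y|^{2−d} α(dx)). -/

import Mathlib

open MeasureTheory Real

/-- The resolvent (Green) kernel of `d`-dimensional Brownian motion killed at an
independent exponential time with parameter `1/σ²`. -/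
noncomputable def greenKernel (d : ℕ) (σ : ℝ) (x y : EuclideanSpace ℝ (Fin d)) : ℝ :=
  (1 / σ ^ 2) * ∫ t in Set.Ioi (0 : ℝ),
    Real.exp (-t / σ ^ 2) * (2 * Real.pi * t) ^ (-(d : ℝ) / 2) *
      Real.exp (-‖x - y‖ ^ 2 / (2 * t))

open Set

namespace GreenAux

/-- The radial profile appearing after the substitution `t = r² s`. -/
noncomputable def psi (d : ℕ) (s : ℝ) : ℝ :=
  (2 * π * s) ^ (-(d : ℝ) / 2) * Real.exp (-1 / (2 * s))

lemma psi_nonneg (d : ℕ) {s : ℝ} (hs : 0 < s) : 0 ≤ psi d s := by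
  unfold psi
  have h1 : (0:ℝ) < 2 * π * s := by positivity
  positivity

lemma psi_pos (d : ℕ) {s : ℝ} (hs : 0 < s) : 0 < psi d s := by
  unfold psi
  have h1 : (0:ℝ) < 2 * π * s := by positivity
  positivity

lemma psi_meas (d : ℕ) : Measurable (psi d) := by
  unfold psi
  fun_prop

lemma psi_le (d : ℕ) {s : ℝ} (hs : 0 < s) :
    psi d s ≤ (d.factorial : ℝ) * 2 ^ (d : ℝ) := by
  have hfac : (1:ℝ) ≤ (d.factorial : ℝ) := by exact_mod_cast d.factorial_pos
  have h2d : (1:ℝ) ≤ 2 ^ (d : ℝ) := Real.one_le_rpow (by norm_num) (by positivity)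
  have hC : (1:ℝ) ≤ (d.factorial : ℝ) * 2 ^ (d : ℝ) := by nlinarith
  have hdnn : (0:ℝ) ≤ (d:ℝ) := Nat.cast_nonneg d
  rcases le_or_gt 1 s with h1 | h1
  · have hbase : (1:ℝ) ≤ 2 * π * s := by nlinarith [pi_gt_three]
    have hp : (2 * π * s) ^ (-(d : ℝ) / 2) ≤ 1 :=
      Real.rpow_le_one_of_one_le_of_nonpos hbase (by linarith)
    have he : Real.exp (-1 / (2 * s)) ≤ 1 := by
      rw [Real.exp_le_one_iff]
      apply div_nonpos_of_nonpos_of_nonneg <;> nlinarith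
    calc psi d s ≤ 1 * 1 :=
          mul_le_mul hp he (Real.exp_nonneg _) zero_le_one
      _ ≤ _ := by simpa using hC
  · -- s < 1
    have h2s : (0:ℝ) < 2 * s := by positivity
    have hu : (0:ℝ) < 1 / (2 * s) := by positivity
    have hexp : Real.exp (-1 / (2 * s)) ≤ (d.factorial : ℝ) * (2 * s) ^ (d : ℝ) := by
      have hpow := Real.pow_div_factorial_le_exp (x := 1 / (2 * s)) hu.le d
      have hppos : (0:ℝ) < (1 / (2 * s)) ^ d / d.factorial := by positivity
      have h0 : Real.exp (-1 / (2 * s)) = (Real.exp (1 / (2 * s)))⁻¹ := by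
        rw [← Real.exp_neg]; ring_nf
      rw [h0]
      refine (inv_anti₀ hppos hpow).trans ?_
      rw [Real.rpow_natCast]
      rw [show ((1 / (2 * s)) ^ d / (d.factorial:ℝ))⁻¹ = (d.factorial:ℝ) * (2*s)^d by
        rw [inv_div, one_div, inv_pow, div_inv_eq_mul]]
    have hp2 : (2 * π * s) ^ (-(d : ℝ) / 2) ≤ (2 * s) ^ (-(d : ℝ) / 2) :=
      Real.rpow_le_rpow_of_nonpos h2s (by nlinarith [pi_gt_three]) (by linarith)
    calc psi d s
        ≤ (2 * s) ^ (-(d : ℝ) / 2) * ((d.factorial : ℝ) * (2 * s) ^ (d : ℝ)) :=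
          mul_le_mul hp2 hexp (Real.exp_nonneg _) (Real.rpow_nonneg h2s.le _)
      _ = (d.factorial : ℝ) * (2 * s) ^ ((d : ℝ) / 2) := by
          rw [mul_comm ((d.factorial : ℝ)) _, ← mul_assoc, ← Real.rpow_add h2s]
          rw [show -(d:ℝ)/2 + d = (d:ℝ)/2 by ring]
          ring
      _ ≤ (d.factorial : ℝ) * 2 ^ ((d : ℝ) / 2) := by
          have : (2 * s) ^ ((d : ℝ) / 2) ≤ 2 ^ ((d : ℝ) / 2) :=
            Real.rpow_le_rpow h2s.le (by linarith) (by linarith)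
          nlinarith
      _ ≤ (d.factorial : ℝ) * 2 ^ (d : ℝ) := by
          have : (2:ℝ) ^ ((d : ℝ) / 2) ≤ 2 ^ (d : ℝ) :=
            Real.rpow_le_rpow_of_exponent_le one_le_two (by linarith)
          nlinarith

lemma psi_integrableOn (d : ℕ) (hd : 3 ≤ d) : IntegrableOn (psi d) (Ioi (0:ℝ)) := by
  have hd3 : (3:ℝ) ≤ (d:ℝ) := by exact_mod_cast hd
  rw [show Ioi (0:ℝ) = Ioc 0 1 ∪ Ioi 1 from (Ioc_union_Ioi_eq_Ioi zero_le_one).symm]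
  apply IntegrableOn.union
  · apply Measure.integrableOn_of_bounded (M := (d.factorial : ℝ) * 2 ^ (d:ℝ))
    · exact (measure_Ioc_lt_top).ne
    · exact (psi_meas d).aestronglyMeasurable
    · filter_upwards [ae_restrict_mem measurableSet_Ioc] with s hs
      rw [Real.norm_eq_abs, abs_of_nonneg (psi_nonneg d hs.1)]
      exact psi_le d hs.1
  · have hint : IntegrableOn (fun s : ℝ => (2*π)^(-(d:ℝ)/2) * s ^ (-(d:ℝ)/2)) (Ioi 1) :=
      (integrableOn_Ioi_rpow_of_lt (by linarith) one_pos).const_mul _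
    apply hint.mono' (((psi_meas d).aestronglyMeasurable).restrict)
    filter_upwards [ae_restrict_mem measurableSet_Ioi] with s hs
    have hs0 : (0:ℝ) < s := lt_trans one_pos hs
    rw [Real.norm_eq_abs, abs_of_nonneg (psi_nonneg d hs0)]
    have he : Real.exp (-1/(2*s)) ≤ 1 :=
      Real.exp_le_one_iff.mpr
        (div_nonpos_of_nonpos_of_nonneg (by norm_num) (by positivity))
    calc psi d s
        = (2*π)^(-(d:ℝ)/2) * s^(-(d:ℝ)/2) * Real.exp (-1/(2*s)) := by
          unfold psi; rw [Real.mul_rpow (by positivity) hs0.le]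
      _ ≤ (2*π)^(-(d:ℝ)/2) * s^(-(d:ℝ)/2) * 1 := by
          apply mul_le_mul_of_nonneg_left he
          positivity
      _ = (2*π)^(-(d:ℝ)/2) * s ^ (-(d:ℝ)/2) := mul_one _

/-- The profile function `φ(r)`. -/
noncomputable def phi (d : ℕ) (σ r : ℝ) : ℝ :=
  (1 / σ ^ 2) * ∫ s in Ioi (0:ℝ), Real.exp (-(r ^ 2 * s) / σ ^ 2) * psi d s

lemma integrand_meas (d : ℕ) (σ r : ℝ) :
    Measurable (fun s => Real.exp (-(r ^ 2 * s) / σ ^ 2) * psi d s) :=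
  (Measurable.mul (by fun_prop) (psi_meas d))

lemma integrand_integrableOn (d : ℕ) {σ r : ℝ} (hσ : 0 < σ) (hr : 0 < r) :
    IntegrableOn (fun s => Real.exp (-(r ^ 2 * s) / σ ^ 2) * psi d s) (Ioi (0:ℝ)) := by
  have hb : 0 < r ^ 2 / σ ^ 2 := by positivity
  have hint : IntegrableOn
      (fun s : ℝ => ((d.factorial:ℝ) * 2 ^ (d:ℝ)) * Real.exp (-(r ^ 2 / σ ^ 2) * s))
      (Ioi 0) := (exp_neg_integrableOn_Ioi 0 hb).const_mul _
  apply hint.mono' ((integrand_meas d σ r).aestronglyMeasurable.restrict)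
  filter_upwards [ae_restrict_mem measurableSet_Ioi] with s hs
  have h1 : 0 ≤ psi d s := psi_nonneg d hs
  rw [Real.norm_eq_abs, abs_of_nonneg (by positivity)]
  have h2 : -(r ^ 2 * s) / σ ^ 2 = -(r ^ 2 / σ ^ 2) * s := by ring
  rw [h2]
  calc Real.exp (-(r ^ 2 / σ ^ 2) * s) * psi d s
      ≤ Real.exp (-(r ^ 2 / σ ^ 2) * s) * ((d.factorial:ℝ) * 2 ^ (d:ℝ)) :=
        mul_le_mul_of_nonneg_left (psi_le d hs) (Real.exp_nonneg _)
    _ = ((d.factorial:ℝ) * 2 ^ (d:ℝ)) * Real.exp (-(r ^ 2 / σ ^ 2) * s) := mul_comm _ _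

lemma phi_nonneg (d : ℕ) (σ r : ℝ) : 0 ≤ phi d σ r := by
  apply mul_nonneg (by positivity)
  apply setIntegral_nonneg measurableSet_Ioi
  intro s hs
  exact mul_nonneg (Real.exp_nonneg _) (psi_nonneg d hs)

lemma phi_anti (d : ℕ) {σ r R : ℝ} (hσ : 0 < σ) (hr : 0 < r) (hrR : r ≤ R) :
    phi d σ R ≤ phi d σ r := by
  apply mul_le_mul_of_nonneg_left _ (by positivity)
  apply integral_mono_of_nonneg
  · filter_upwards [ae_restrict_mem measurableSet_Ioi] with s hs
    exact mul_nonneg (Real.exp_nonneg _) (psi_nonneg d hs)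
  · exact integrand_integrableOn d hσ hr
  · filter_upwards [ae_restrict_mem measurableSet_Ioi] with s hs
    apply mul_le_mul_of_nonneg_right _ (psi_nonneg d hs)
    apply Real.exp_le_exp.mpr
    have h2 : (0:ℝ) < σ ^ 2 := by positivity
    rw [div_le_div_iff_of_pos_right h2]
    have hs' : (0:ℝ) < s := hs
    have hsq : r ^ 2 ≤ R ^ 2 := by nlinarith
    nlinarith [mul_le_mul_of_nonneg_right hsq hs'.le]

lemma phi_pos (d : ℕ) {σ R : ℝ} (hσ : 0 < σ) (hR : 0 < R) : 0 < phi d σ R := by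
  apply mul_pos (by positivity)
  have hnn : 0 ≤ᵐ[volume.restrict (Ioi (0:ℝ))]
      fun s => Real.exp (-(R ^ 2 * s) / σ ^ 2) * psi d s := by
    filter_upwards [ae_restrict_mem measurableSet_Ioi] with s hs
    exact mul_nonneg (Real.exp_nonneg _) (psi_nonneg d hs)
  rw [setIntegral_pos_iff_support_of_nonneg_ae hnn (integrand_integrableOn d hσ hR)]
  have hsub : Ioi (0:ℝ) ⊆
      Function.support (fun s => Real.exp (-(R ^ 2 * s) / σ ^ 2) * psi d s) ∩ Ioi 0 := by
    intro s hs
    exact ⟨(mul_pos (Real.exp_pos _) (psi_pos d hs)).ne', hs⟩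
  apply lt_of_lt_of_le _ (measure_mono hsub)
  simp [Real.volume_Ioi]

lemma phi_le_phi0 (d : ℕ) (hd : 3 ≤ d) {σ : ℝ} (hσ : 0 < σ) (r : ℝ) :
    phi d σ r ≤ (1 / σ ^ 2) * ∫ s in Ioi (0:ℝ), psi d s := by
  apply mul_le_mul_of_nonneg_left _ (by positivity)
  apply integral_mono_of_nonneg
  · filter_upwards [ae_restrict_mem measurableSet_Ioi] with s hs
    exact mul_nonneg (Real.exp_nonneg _) (psi_nonneg d hs)
  · exact psi_integrableOn d hd
  · filter_upwards [ae_restrict_mem measurableSet_Ioi] with s hs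
    calc Real.exp (-(r ^ 2 * s) / σ ^ 2) * psi d s ≤ 1 * psi d s := by
          apply mul_le_mul_of_nonneg_right _ (psi_nonneg d hs)
          apply Real.exp_le_one_iff.mpr
          refine div_nonpos_of_nonpos_of_nonneg ?_ (sq_nonneg σ)
          have hs' : (0:ℝ) < s := hs
          nlinarith [sq_nonneg r]
      _ = psi d s := one_mul _

lemma green_eq (d : ℕ) {σ : ℝ} (hσ : 0 < σ) {x y : EuclideanSpace ℝ (Fin d)} (hxy : x ≠ y) :
    greenKernel d σ x y = ‖x - y‖ ^ ((2:ℝ) - d) * phi d σ ‖x - y‖ := by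
  have hr : 0 < ‖x - y‖ := norm_pos_iff.mpr (sub_ne_zero.mpr hxy)
  set r : ℝ := ‖x - y‖ with hrdef
  have hr2 : (0:ℝ) < r ^ 2 := by positivity
  set f : ℝ → ℝ := fun t => Real.exp (-t / σ ^ 2) * (2 * π * t) ^ (-(d:ℝ)/2) *
    Real.exp (-r ^ 2 / (2 * t)) with hf
  have hsub := integral_comp_mul_left_Ioi f 0 hr2
  rw [mul_zero] at hsub
  have hstep1 : (∫ t in Ioi (0:ℝ), f t) = r ^ 2 * ∫ s in Ioi (0:ℝ), f (r ^ 2 * s) := by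
    rw [hsub, smul_eq_mul, ← mul_assoc, mul_inv_cancel₀ hr2.ne', one_mul]
  have hstep2 : (∫ s in Ioi (0:ℝ), f (r ^ 2 * s))
      = r ^ (-(d:ℝ)) * ∫ s in Ioi (0:ℝ), Real.exp (-(r ^ 2 * s) / σ ^ 2) * psi d s := by
    rw [← MeasureTheory.integral_const_mul]
    apply setIntegral_congr_fun measurableSet_Ioi
    intro s hs
    have hs0 : (0:ℝ) < s := hs
    have hA : ((r ^ 2 : ℝ)) ^ (-(d:ℝ)/2) = r ^ (-(d:ℝ)) := by
      rw [← Real.rpow_natCast r 2, ← Real.rpow_mul hr.le,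
        show ((2:ℕ):ℝ) * (-(d:ℝ)/2) = -(d:ℝ) by push_cast; ring]
    have hB : (2 * π * (r ^ 2 * s)) ^ (-(d:ℝ)/2)
        = (r ^ 2 : ℝ) ^ (-(d:ℝ)/2) * (2 * π * s) ^ (-(d:ℝ)/2) := by
      rw [show 2 * π * (r ^ 2 * s) = (r ^ 2) * (2 * π * s) by ring,
        Real.mul_rpow (by positivity) (by positivity)]
    have hC : -r ^ 2 / (2 * (r ^ 2 * s)) = -1 / (2 * s) := by
      field_simp
    simp only [hf]
    rw [hB, hA, hC]
    unfold psi
    ring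
  have hstep3 : r ^ 2 * (r ^ (-(d:ℝ)) *
      ∫ s in Ioi (0:ℝ), Real.exp (-(r ^ 2 * s) / σ ^ 2) * psi d s)
      = r ^ ((2:ℝ) - d) *
      ∫ s in Ioi (0:ℝ), Real.exp (-(r ^ 2 * s) / σ ^ 2) * psi d s := by
    rw [← mul_assoc, ← Real.rpow_natCast r 2, ← Real.rpow_add hr,
      show ((2:ℕ):ℝ) + -(d:ℝ) = (2:ℝ) - d by push_cast; ring]
  have : greenKernel d σ x y = (1 / σ ^ 2) * ∫ t in Ioi (0:ℝ), f t := rfl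
  rw [this, hstep1, hstep2, hstep3, phi]
  ring

lemma green_meas (d : ℕ) (σ : ℝ) (y : EuclideanSpace ℝ (Fin d)) :
    Measurable (fun x => greenKernel d σ x y) := by
  unfold greenKernel
  apply Measurable.const_mul
  have hsm : StronglyMeasurable (fun p : EuclideanSpace ℝ (Fin d) × ℝ =>
      Real.exp (-p.2 / σ ^ 2) * (2 * π * p.2) ^ (-(d:ℝ)/2) *
        Real.exp (-‖p.1 - y‖ ^ 2 / (2 * p.2))) := by
    apply Measurable.stronglyMeasurable
    fun_prop
  exact hsm.integral_prod_right'.measurable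

lemma green_nonneg (d : ℕ) (σ : ℝ) (x y : EuclideanSpace ℝ (Fin d)) :
    0 ≤ greenKernel d σ x y := by
  unfold greenKernel
  apply mul_nonneg (by positivity)
  apply setIntegral_nonneg measurableSet_Ioi
  intro t ht
  have ht0 : (0:ℝ) < t := ht
  have h2pt : (0:ℝ) < 2 * π * t := by
    have := pi_pos; nlinarith
  exact mul_nonneg (mul_nonneg (Real.exp_nonneg _) (Real.rpow_nonneg h2pt.le _))
    (Real.exp_nonneg _)

lemma ae_ne (d : ℕ) (α : Measure (EuclideanSpace ℝ (Fin d)))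
    (y : EuclideanSpace ℝ (Fin d)) (hy : α {y} = 0) : ∀ᵐ x ∂α, x ≠ y := by
  rw [ae_iff]
  have : {x : EuclideanSpace ℝ (Fin d) | ¬ x ≠ y} = {y} := by ext x; simp
  rw [this]; exact hy

lemma green_integrable (d : ℕ) (hd : 3 ≤ d) {σ : ℝ} (hσ : 0 < σ)
    (α : Measure (EuclideanSpace ℝ (Fin d))) (y : EuclideanSpace ℝ (Fin d))
    (hy : α {y} = 0)
    (hw : Integrable (fun x => ‖x - y‖ ^ ((2:ℝ) - d)) α) :
    Integrable (fun x => greenKernel d σ x y) α := by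
  set c0 : ℝ := (1 / σ ^ 2) * ∫ s in Ioi (0:ℝ), psi d s with hc0def
  apply Integrable.mono' (hw.const_mul c0) (green_meas d σ y).aestronglyMeasurable
  filter_upwards [ae_ne d α y hy] with x hx
  rw [Real.norm_eq_abs, abs_of_nonneg (green_nonneg d σ x y), green_eq d hσ hx]
  have hwnn : 0 ≤ ‖x - y‖ ^ ((2:ℝ) - d) := Real.rpow_nonneg (norm_nonneg _) _
  calc ‖x - y‖ ^ ((2:ℝ) - d) * phi d σ ‖x - y‖
      ≤ ‖x - y‖ ^ ((2:ℝ) - d) * c0 :=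
        mul_le_mul_of_nonneg_left (phi_le_phi0 d hd hσ _) hwnn
    _ = c0 * ‖x - y‖ ^ ((2:ℝ) - d) := mul_comm _ _

end GreenAux

open GreenAux in
/-- Lemma 3.3 (monotone domination of the resolvent kernel). -/
theorem stmt1 (d : ℕ) (hd : 3 ≤ d) (σ : ℝ) (hσ : 0 < σ)
    (α : Measure (EuclideanSpace ℝ (Fin d))) [IsProbabilityMeasure α]
    (y : EuclideanSpace ℝ (Fin d)) (hy : α {y} = 0)
    (hw : Integrable (fun x => ‖x - y‖ ^ ((2 : ℝ) - d)) α)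
    (hwpos : 0 < ∫ x, ‖x - y‖ ^ ((2 : ℝ) - d) ∂α)
    (R : ℝ) (hR : 0 < R) :
    (∫ x in Metric.closedBall y R, ‖x - y‖ ^ ((2 : ℝ) - d) ∂α) /
        (∫ x, ‖x - y‖ ^ ((2 : ℝ) - d) ∂α) ≤
      (∫ x in Metric.closedBall y R, greenKernel d σ x y ∂α) /
        (∫ x, greenKernel d σ x y ∂α) := by
  have hBm : MeasurableSet (Metric.closedBall y R) := Metric.isClosed_closedBall.measurableSet
  have hGi : Integrable (fun x => greenKernel d σ x y) α :=
    green_integrable d hd hσ α y hy hw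
  set c : ℝ := phi d σ R with hcdef
  have hcpos : 0 < c := phi_pos d hσ hR
  set B := Metric.closedBall y R with hBdef
  set A := ∫ x in B, ‖x - y‖ ^ ((2 : ℝ) - d) ∂α with hAdef
  set u := ∫ x in Bᶜ, ‖x - y‖ ^ ((2 : ℝ) - d) ∂α with hudef
  set A' := ∫ x in B, greenKernel d σ x y ∂α with hA'def
  set v := ∫ x in Bᶜ, greenKernel d σ x y ∂α with hvdef
  have h1 : c * A ≤ A' := by
    rw [hAdef, ← MeasureTheory.integral_const_mul, hA'def]
    apply setIntegral_mono_ae_restrict ((hw.const_mul c).integrableOn) (hGi.integrableOn)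
    filter_upwards [ae_restrict_mem hBm, ae_restrict_of_ae (ae_ne d α y hy)] with x hxB hxy
    have hr : 0 < ‖x - y‖ := norm_pos_iff.mpr (sub_ne_zero.mpr hxy)
    have hrR : ‖x - y‖ ≤ R := by rwa [Metric.mem_closedBall, dist_eq_norm] at hxB
    rw [green_eq d hσ hxy]
    calc c * ‖x - y‖ ^ ((2:ℝ) - d)
        ≤ phi d σ ‖x - y‖ * ‖x - y‖ ^ ((2:ℝ) - d) :=
          mul_le_mul_of_nonneg_right (phi_anti d hσ hr hrR)
            (Real.rpow_nonneg (norm_nonneg _) _)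
      _ = ‖x - y‖ ^ ((2:ℝ) - d) * phi d σ ‖x - y‖ := mul_comm _ _
  have h2 : v ≤ c * u := by
    rw [hudef, ← MeasureTheory.integral_const_mul, hvdef]
    apply setIntegral_mono_ae_restrict (hGi.integrableOn) ((hw.const_mul c).integrableOn)
    filter_upwards [ae_restrict_mem hBm.compl] with x hxB
    have hrR : R < ‖x - y‖ := by
      have : ¬ dist x y ≤ R := hxB
      rw [dist_eq_norm] at this
      linarith [not_le.mp this]
    have hr : 0 < ‖x - y‖ := lt_trans hR hrR
    have hxy : x ≠ y := by
      intro h; subst h; simp at hr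
    rw [green_eq d hσ hxy]
    calc ‖x - y‖ ^ ((2:ℝ) - d) * phi d σ ‖x - y‖
        = phi d σ ‖x - y‖ * ‖x - y‖ ^ ((2:ℝ) - d) := mul_comm _ _
      _ ≤ c * ‖x - y‖ ^ ((2:ℝ) - d) :=
          mul_le_mul_of_nonneg_right (phi_anti d hσ hR hrR.le)
            (Real.rpow_nonneg (norm_nonneg _) _)
  have hA : 0 ≤ A :=
    setIntegral_nonneg hBm fun x _ => Real.rpow_nonneg (norm_nonneg _) _
  have hu : 0 ≤ u :=
    setIntegral_nonneg hBm.compl fun x _ => Real.rpow_nonneg (norm_nonneg _) _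
  have hA' : 0 ≤ A' := setIntegral_nonneg hBm fun x _ => green_nonneg d σ x y
  have hv : 0 ≤ v := setIntegral_nonneg hBm.compl fun x _ => green_nonneg d σ x y
  have hT : (∫ x, ‖x - y‖ ^ ((2 : ℝ) - d) ∂α) = A + u := (integral_add_compl hBm hw).symm
  have hT' : (∫ x, greenKernel d σ x y ∂α) = A' + v := (integral_add_compl hBm hGi).symm
  rw [hT, hT']
  rw [hT] at hwpos
  rcases eq_or_lt_of_le hA' with hA'0 | hA'pos
  · have hA0 : A = 0 := by nlinarith
    rw [hA0, ← hA'0]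
    simp
  · have hden : 0 < A' + v := by linarith
    rw [div_le_div_iff₀ hwpos hden]
    nlinarith [mul_le_mul_of_nonneg_left h2 hA, mul_le_mul_of_nonneg_right h1 hu]
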